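/- The set partitions of {1,…,2m} into blocks of size 2 (chord diagrams on 2m points) weighted by q^{number of crossings} have generating polynomial T_m(q) satisfying T_m(q)·(1−q)^m = Σ_{i=0}^m (−1)^i [C(2m, m−i) − C(2m, m−i−1)] q^{binom(i+1,2)} (the Touchard–Riordan formula). -/

import Mathlib

open Finset
open scoped Classical

/-- The number of crossings of a matching `M`, whose blocks are recorded as pairs `(a, b)`
with `a < b`: pairs of blocks `(a,b)`, `(c,d)` with `a < c < b < d`. -/
def crossNum (M : Finset (ℕ × ℕ)) : ℕ :=
  ((M ×ˢ M).filter fun p => p.1.1 < p.2.1 ∧ p.2.1 < p.1.2 ∧ p.1.2 < p.2.2).card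

/-- The Touchard–Riordan generating polynomial `T_m(q)`: the sum of `q^{crossings}` over all
perfect matchings (chord diagrams) of `{0,…,2m-1}`, a matching being recorded as a set of
pairs `(a, b)` with `a < b` such that every point lies in exactly one pair. -/
noncomputable def touchardPoly (m : ℕ) : Polynomial ℤ :=
  ∑ M ∈ ((Finset.range (2 * m) ×ˢ Finset.range (2 * m)).powerset).filter
      (fun M => (∀ p ∈ M, p.1 < p.2) ∧
        ∀ x < 2 * m, ∃! p, p ∈ M ∧ (x = p.1 ∨ x = p.2)),
    Polynomial.X ^ crossNum M

noncomputable def Np : ℕ → ℕ → Polynomial ℤ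
  | 0, 0 => 1
  | 0, _+1 => 0
  | n+1, k => Np n (k+1) + (∑ j ∈ Finset.range k, Polynomial.X ^ j) * Np n (k-1)

noncomputable def Qb : ℕ → ℕ → Polynomial ℤ
  | 0, 0 => 1
  | 0, _+1 => 0
  | n+1, k => Qb n (k+1) + (if k = 0 then 0 else 1 - Polynomial.X ^ k) * Qb n (k-1)



lemma geom_mul (k : ℕ) : (∑ j ∈ Finset.range k, (Polynomial.X:Polynomial ℤ) ^ j) * (1 - Polynomial.X) = 1 - Polynomial.X ^ k := by
  have := geom_sum_mul (Polynomial.X : Polynomial ℤ) k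
  have h : (∑ j ∈ Finset.range k, (Polynomial.X:Polynomial ℤ) ^ j) * (1 - Polynomial.X)
      = -((∑ j ∈ Finset.range k, (Polynomial.X:Polynomial ℤ) ^ j) * (Polynomial.X - 1)) := by ring
  rw [h, this]; ring

lemma Np_Qb : ∀ n k, (n + k) % 2 = 0 → Np n k * (1 - Polynomial.X) ^ ((n + k)/2) = Qb n k := by
  intro n
  induction n with
  | zero =>
    intro k hk
    match k, hk with
    | 0, _ => simp [Np, Qb]
    | k+1, hk => simp [Np, Qb]
  | succ n ih =>
    intro k hk
    have hpow : (n + 1 + k)/2 = (n + (k+1))/2 := by omega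
    rcases Nat.eq_zero_or_pos k with rfl | hkpos
    · show Np (n+1) 0 * _ = Qb (n+1) 0
      rw [Np, Qb]
      simp only [Finset.range_zero, Finset.sum_empty, zero_mul, add_zero, if_pos rfl, zero_mul,
        add_zero]
      rw [hpow, ih (0+1) (by omega)]
      simp
    · have hk1 : (n + (k+1)) % 2 = 0 := by omega
      have hk2 : (n + (k-1)) % 2 = 0 := by omega
      rw [Np, Qb, add_mul, hpow, ih (k+1) hk1]
      congr 1
      rw [if_neg (by omega)]
      have hpow2 : (n + (k+1))/2 = (n + (k-1))/2 + 1 := by omega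
      rw [hpow2, pow_succ, mul_assoc]
      rw [show Np n (k-1) * ((1 - Polynomial.X) ^ ((n + (k-1))/2) * (1 - Polynomial.X))
          = (Np n (k-1) * (1 - Polynomial.X) ^ ((n + (k-1))/2)) * (1 - Polynomial.X) from by ring,
        ih (k-1) hk2]
      rw [mul_comm (Qb n (k-1)) (1 - Polynomial.X), ← mul_assoc, geom_mul]


noncomputable def gb : ℕ → ℕ → Polynomial ℤ
  | _, 0 => 1
  | 0, _+1 => 0
  | n+1, k+1 => gb n (k+1) + Polynomial.X^(n-k) * gb n k

lemma gb_zero_right (n : ℕ) : gb n 0 = 1 := by cases n <;> rfl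

lemma gb_zero : ∀ n k, n < k → gb n k = 0 := by
  intro n
  induction n with
  | zero => intro k hk; match k, hk with | k+1, _ => rfl
  | succ n ih =>
    intro k hk
    match k, hk with
    | k+1, hk =>
      show gb n (k+1) + Polynomial.X^(n-k) * gb n k = 0
      rw [ih (k+1) (by omega), ih k (by omega)]
      ring

lemma gb_self : ∀ n, gb n n = 1 := by
  intro n
  induction n with
  | zero => rfl
  | succ n ih =>
    show gb n (n+1) + Polynomial.X^(n-n) * gb n n = 1
    rw [gb_zero n (n+1) (by omega), ih]; simp

lemma gb_pascalA : ∀ n k, gb (n+1) (k+1) = Polynomial.X^(k+1) * gb n (k+1) + gb n k := by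
  intro n
  induction n with
  | zero =>
    intro k
    match k with
    | 0 => show gb 0 1 + _ * gb 0 0 = _; simp [gb_zero 0 1 (by omega)]
    | k+1 =>
      show gb 0 (k+2) + _ * gb 0 (k+1) = _
      rw [gb_zero 0 (k+2) (by omega), gb_zero 0 (k+1) (by omega)]; ring
  | succ n ih =>
    intro k
    have aux : ∀ k ≤ n, Polynomial.X^(n+1-k) * gb (n+1) k - gb (n+1) k
        = (Polynomial.X:Polynomial ℤ)^(n+1) * gb n k - gb n k := by
      intro k hk
      match k with
      | 0 =>
        rw [gb_zero_right, gb_zero_right]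
        simp
      | j+1 =>
        have hB : gb (n+1) (j+1) = gb n (j+1) + Polynomial.X^(n-j) * gb n j := rfl
        have hA : gb (n+1) (j+1) = Polynomial.X^(j+1) * gb n (j+1) + gb n j := ih j
        have e0 : n+1-(j+1) = n-j := by omega
        rw [e0]
        calc Polynomial.X^(n-j) * gb (n+1) (j+1) - gb (n+1) (j+1)
            = Polynomial.X^(n-j) * (Polynomial.X^(j+1) * gb n (j+1) + gb n j)
              - (gb n (j+1) + Polynomial.X^(n-j) * gb n j) := by rw [← hA, ← hB]
          _ = Polynomial.X^(n-j) * Polynomial.X^(j+1) * gb n (j+1) - gb n (j+1) := by ring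
          _ = Polynomial.X^(n+1) * gb n (j+1) - gb n (j+1) := by
              rw [← pow_add]
              have : n - j + (j+1) = n+1 := by omega
              rw [this]
    show gb (n+1) (k+1) + Polynomial.X^(n+1-k) * gb (n+1) k = _
    rcases Nat.lt_or_ge n k with h | h
    · rcases Nat.lt_or_ge (n+1) k with h2 | h2
      · have z1 := gb_zero (n+1) (k+1) (by omega)
        have z2 := gb_zero (n+1) k (by omega)
        rw [z1, z2]; ring
      · have hk : k = n+1 := by omega
        subst hk
        have z1 := gb_zero (n+1) (n+2) (by omega)
        rw [z1, gb_self, Nat.sub_self]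
        simp
    · have h1 := aux k h
      have h2 : gb (n+1) (k+1) = gb n (k+1) + Polynomial.X^(n-k) * gb n k := rfl
      have hA : gb (n+1) (k+1) = Polynomial.X^(k+1) * gb n (k+1) + gb n k := ih k
      have e1 : Polynomial.X^(k+1) * Polynomial.X^(n-k) = (Polynomial.X:Polynomial ℤ)^(n+1) := by
        rw [← pow_add]
        have : k + 1 + (n-k) = n+1 := by omega
        rw [this]
      linear_combination h1 - Polynomial.X^(k+1) * h2 + hA - gb n k * e1

lemma gb_symm : ∀ n k, k ≤ n → gb n k = gb n (n - k) := by
  intro n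
  induction n with
  | zero => intro k hk; interval_cases k; rfl
  | succ n ih =>
    intro k hk
    match k with
    | 0 => rw [gb_zero_right, Nat.sub_zero, gb_self]
    | j+1 =>
      have h1 : gb (n+1) (j+1) = gb n (j+1) + Polynomial.X^(n-j) * gb n j := rfl
      have h2 : n + 1 - (j+1) = (n - j - 1) + 1 ∨ n = j := by omega
      rcases h2 with h2 | rfl
      · rw [h1, h2, gb_pascalA n (n-j-1)]
        have e1 : n - j - 1 + 1 = n - j := by omega
        rw [e1]
        have e2 : gb n (n-j) = gb n j := by
          rw [ih j (by omega)]
        have e3 : gb n (n-j-1) = gb n (j+1) := by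
          have : n - (j+1) = n - j - 1 := by omega
          rw [ih (j+1) (by omega), this]
        rw [e2, e3]; ring
      · rw [Nat.sub_self, gb_zero_right, gb_self]

lemma choose_two_succ (k : ℕ) : (k+1).choose 2 = k.choose 2 + k := by
  show (k+1).choose (1+1) = _
  rw [Nat.choose_succ_succ]
  simp [Nat.choose_one_right]; ring

lemma choose_two_add (a b : ℕ) : (a+b).choose 2 = a.choose 2 + a*b + b.choose 2 := by
  induction b with
  | zero => simp
  | succ b ih =>
    have h : a + (b+1) = (a+b) + 1 := by ring
    rw [h, choose_two_succ, ih, choose_two_succ]; ring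

lemma two_choose_two (j : ℕ) : 2 * ((j+1).choose 2) = j * (j+1) := by
  induction j with
  | zero => rfl
  | succ j ih =>
    rw [show j+1+1 = (j+1)+1 from rfl, choose_two_succ, Nat.mul_add, ih]; ring

lemma gb_prod (M : ℕ) :
    ∏ i ∈ Finset.range M, (Polynomial.X - Polynomial.C ((Polynomial.X:Polynomial ℤ)^i)) =
    ∑ k ∈ Finset.range (M+1),
      Polynomial.C ((-1)^k * gb M k * Polynomial.X^(k.choose 2)) * Polynomial.X^(M+1-(k+1)) := by
  induction M with
  | zero => simp [gb_zero_right]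
  | succ M ih =>
    rw [Finset.prod_range_succ, ih, Finset.sum_mul]
    have expand : ∀ k ∈ Finset.range (M+1),
        (Polynomial.C ((-1)^k * gb M k * Polynomial.X^(k.choose 2)) * Polynomial.X^(M+1-(k+1)))
        * (Polynomial.X - Polynomial.C ((Polynomial.X:Polynomial ℤ)^M))
        = Polynomial.C ((-1)^k * gb M k * Polynomial.X^(k.choose 2)) * Polynomial.X^(M+1-k)
          - Polynomial.C ((-1)^k * gb M k * Polynomial.X^(k.choose 2 + M)) * Polynomial.X^(M-k) := by
      intro k hk
      rw [Finset.mem_range] at hk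
      have e1 : M + 1 - k = (M+1-(k+1)) + 1 := by omega
      have e2 : M - k = M+1-(k+1) := by omega
      rw [e1, e2, pow_succ]
      simp only [map_mul, map_add, map_pow, map_neg, map_one, pow_add, mul_sub]
      ring
    rw [Finset.sum_congr rfl expand, Finset.sum_sub_distrib]
    -- RHS side manipulation
    rw [Finset.sum_range_succ'
      (fun k => Polynomial.C ((-1)^k * gb (M+1) k * Polynomial.X^(k.choose 2)) * Polynomial.X^(M+1+1-(k+1)))]
    have splitTerm : ∀ k ∈ Finset.range (M+1),
        Polynomial.C ((-1)^(k+1) * gb (M+1) (k+1) * Polynomial.X^((k+1).choose 2)) * Polynomial.X^(M+1+1-(k+1+1))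
        = Polynomial.C ((-1)^(k+1) * gb M (k+1) * Polynomial.X^((k+1).choose 2)) * Polynomial.X^(M-k)
          - Polynomial.C ((-1)^k * gb M k * Polynomial.X^(k.choose 2 + M)) * Polynomial.X^(M-k) := by
      intro k hk
      rw [Finset.mem_range] at hk
      have hgb : gb (M+1) (k+1) = gb M (k+1) + Polynomial.X^(M-k) * gb M k := rfl
      have e3 : M+1+1-(k+1+1) = M - k := by omega
      have e4 : k.choose 2 + M = (k+1).choose 2 + (M - k) := by
        rw [choose_two_succ]; omega
      rw [e3, e4, hgb, pow_succ]
      simp only [map_mul, map_add, map_pow, map_neg, map_one, pow_add, pow_succ]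
      ring
    rw [Finset.sum_congr rfl splitTerm, Finset.sum_sub_distrib]
    -- first LHS sum: peel k = 0
    rw [Finset.sum_range_succ'
      (fun k => Polynomial.C ((-1)^k * gb M k * Polynomial.X^(k.choose 2)) * Polynomial.X^(M+1-k))]
    -- second RHS sum: last term (k = M) vanishes
    rw [Finset.sum_range_succ
      (fun k => Polynomial.C ((-1)^(k+1) * gb M (k+1) * Polynomial.X^((k+1).choose 2)) * Polynomial.X^(M-k))]
    rw [gb_zero M (M+1) (by omega)]
    have matchTerm : ∀ k ∈ Finset.range M,
        Polynomial.C ((-1)^(k+1) * gb M (k+1) * Polynomial.X^((k+1).choose 2)) * Polynomial.X^(M+1-(k+1))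
        = Polynomial.C ((-1)^(k+1) * gb M (k+1) * Polynomial.X^((k+1).choose 2)) * Polynomial.X^(M-k) := by
      intro k hk
      rw [Finset.mem_range] at hk
      congr 2
      omega
    rw [Finset.sum_congr rfl matchTerm]
    simp only [gb_zero_right, pow_zero, one_mul, mul_one, Nat.choose_zero_right, map_one]
    rw [show Nat.choose 0 2 = 0 from rfl, show M+1+1-(0+1) = M+1-0 by omega]
    simp only [mul_zero, zero_mul, map_zero, add_zero]
    ring


lemma gb_aux : ∀ n k, k ≤ n → Polynomial.X^(n+1-k) * gb (n+1) k - gb (n+1) k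
    = (Polynomial.X:Polynomial ℤ)^(n+1) * gb n k - gb n k := by
  intro n k hk
  match k with
  | 0 =>
    rw [gb_zero_right, gb_zero_right]
    simp
  | j+1 =>
    have hB : gb (n+1) (j+1) = gb n (j+1) + Polynomial.X^(n-j) * gb n j := rfl
    have hA : gb (n+1) (j+1) = Polynomial.X^(j+1) * gb n (j+1) + gb n j := gb_pascalA n j
    have e0 : n+1-(j+1) = n-j := by omega
    rw [e0]
    calc Polynomial.X^(n-j) * gb (n+1) (j+1) - gb (n+1) (j+1)
        = Polynomial.X^(n-j) * (Polynomial.X^(j+1) * gb n (j+1) + gb n j)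
          - (gb n (j+1) + Polynomial.X^(n-j) * gb n j) := by rw [← hA, ← hB]
      _ = Polynomial.X^(n-j) * Polynomial.X^(j+1) * gb n (j+1) - gb n (j+1) := by ring
      _ = Polynomial.X^(n+1) * gb n (j+1) - gb n (j+1) := by
          rw [← pow_add]
          have : n - j + (j+1) = n+1 := by omega
          rw [this]

lemma gb_def (n k : ℕ) : gb (n+1) (k+1) = gb n (k+1) + Polynomial.X^(n-k) * gb n k := rfl


lemma sum_range_add' {M : Type*} [AddCommMonoid M] (f : ℕ → M) (a b : ℕ) :
    ∑ k ∈ Finset.range (a+b), f k = (∑ k ∈ Finset.range a, f k) + ∑ j ∈ Finset.range b, f (a+j) := by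
  induction b with
  | zero => simp
  | succ b ih => rw [← Nat.add_assoc, Finset.sum_range_succ, ih, Finset.sum_range_succ, add_assoc]

noncomputable def vv (j : ℕ) : Polynomial ℤ :=
  if j % 2 = 1 then 0 else
  (-1)^(j/2) * (Polynomial.X^((j/2+1).choose 2) + if j = 0 then 0 else Polynomial.X^((j/2).choose 2))

lemma vv_zero : vv 0 = 1 := by simp [vv]
lemma vv_odd (j : ℕ) (h : j % 2 = 1) : vv j = 0 := by simp [vv, h]
lemma vv_even (i : ℕ) : vv (2*(i+1)) =
    (-1)^(i+1) * (Polynomial.X^((i+2).choose 2) + Polynomial.X^((i+1).choose 2)) := by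
  have h1 : 2*(i+1) % 2 = 0 := by omega
  have h2 : 2*(i+1) / 2 = i+1 := by omega
  simp only [vv, h1, h2]
  norm_num

lemma gauss_eval (s : ℕ) (hs : 1 ≤ s) :
    ∑ k ∈ Finset.range (2*s+1),
      (-1)^k * gb (2*s) k * Polynomial.X^(k.choose 2 + (s-1)*(2*s-k)) = (0 : Polynomial ℤ) := by
  have h := congrArg (Polynomial.eval ((Polynomial.X:Polynomial ℤ)^(s-1))) (gb_prod (2*s))
  rw [Polynomial.eval_prod, Polynomial.eval_finset_sum] at h
  have hL : ∏ i ∈ Finset.range (2*s),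
      Polynomial.eval ((Polynomial.X:Polynomial ℤ)^(s-1)) (Polynomial.X - Polynomial.C ((Polynomial.X:Polynomial ℤ)^i)) = 0 := by
    apply Finset.prod_eq_zero (Finset.mem_range.2 (show s-1 < 2*s by omega))
    simp
  rw [hL] at h
  have hc : ∑ k ∈ Finset.range (2*s+1),
      (-1)^k * gb (2*s) k * Polynomial.X^(k.choose 2 + (s-1)*(2*s-k))
      = ∑ k ∈ Finset.range (2*s+1),
        Polynomial.eval ((Polynomial.X:Polynomial ℤ)^(s-1))
          (Polynomial.C ((-1)^k * gb (2*s) k * Polynomial.X^(k.choose 2)) * Polynomial.X^(2*s+1-(k+1))) := by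
    apply Finset.sum_congr rfl
    intro k hk
    rw [Finset.mem_range] at hk
    rw [Polynomial.eval_mul, Polynomial.eval_C, Polynomial.eval_pow, Polynomial.eval_X]
    rw [← pow_mul, pow_add]
    have e : 2*s+1-(k+1) = 2*s - k := by omega
    rw [e]
    ring
  rw [hc, ← h]

lemma orth (s : ℕ) (hs : 1 ≤ s) :
    ∑ i ∈ Finset.range (s+1), gb (2*s) (s-i) * vv (2*i) = 0 := by
  have key := gauss_eval s hs
  set t : ℕ → Polynomial ℤ :=
    fun k => (-1)^k * gb (2*s) k * Polynomial.X^(k.choose 2 + (s-1)*(2*s-k)) with ht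
  set D : ℕ := s.choose 2 + (s-1)*s with hD
  have hsplit : ∑ k ∈ Finset.range (2*s+1), t k
      = (∑ j ∈ Finset.range s, t (s-1-j)) + (t s + ∑ j ∈ Finset.range s, t (s+(j+1))) := by
    rw [show 2*s+1 = s + (s+1) by omega, sum_range_add' t s (s+1)]
    rw [Finset.sum_range_succ' (fun j => t (s + j))]
    rw [Finset.sum_range_reflect (fun j => t j) s]
    simp only [Nat.add_zero]
    ring
  have pairEq : ∀ j ∈ Finset.range s,
      t (s-1-j) + t (s+(j+1)) = (-1)^s * Polynomial.X^D * (gb (2*s) (s-(j+1)) * vv (2*(j+1))) := by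
    intro j hj
    rw [Finset.mem_range] at hj
    obtain ⟨d, rfl⟩ : ∃ d, s = j + 1 + d := ⟨s - (j+1), by omega⟩
    have e1 : j+1+d-1-j = d := by omega
    have e2 : (j+1+d) - (j+1) = d := by omega
    have e3 : (j+1+d) + (j+1) = 2*(j+1)+d := by omega
    -- exponent identities
    have E2 : d.choose 2 + ((j+1+d)-1)*(2*(j+1+d) - d) = D + (j+1).choose 2 := by
      have ha : (j+1+d)-1 = j+d := by omega
      have hb : 2*(j+1+d) - d = 2*j+2+d := by omega
      have hc : (j+1+d).choose 2 = d.choose 2 + d*(j+1) + (j+1).choose 2 := by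
        rw [show j+1+d = d+(j+1) by omega, choose_two_add]
      have h2c : (2:ℤ) * ((j+1).choose 2 : ℤ) = (j:ℤ) * ((j:ℤ)+1) := by
        exact_mod_cast two_choose_two j
      rw [hD, ha, hb, hc]
      zify
      linear_combination -h2c
    have E1 : (2*(j+1)+d).choose 2 + ((j+1+d)-1)*(2*(j+1+d) - (2*(j+1)+d)) = D + (j+2).choose 2 := by
      have ha : (j+1+d)-1 = j+d := by omega
      have hb : 2*(j+1+d) - (2*(j+1)+d) = d := by omega
      have hc : (2*(j+1)+d).choose 2 = (j+1+d).choose 2 + (j+1+d)*(j+1) + (j+1).choose 2 := by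
        rw [show 2*(j+1)+d = (j+1+d)+(j+1) by omega, choose_two_add]
      have hd' : (j+1+d).choose 2 = d.choose 2 + d*(j+1) + (j+1).choose 2 := by
        rw [show j+1+d = d+(j+1) by omega, choose_two_add]
      have he : (j+2).choose 2 = (j+1).choose 2 + (j+1) := by
        rw [show j+2 = (j+1)+1 by omega, choose_two_succ]
      rw [hD, ha, hb, hc, hd', he]
      zify
      ring
    have hsymm : gb (2*(j+1+d)) (2*(j+1)+d) = gb (2*(j+1+d)) (d) := by
      rw [gb_symm (2*(j+1+d)) (2*(j+1)+d) (by omega)]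
      congr 1
      omega
    have hsgn : ((-1 : Polynomial ℤ))^(2*(j+1)+d) = (-1)^d := by
      rw [show 2*(j+1)+d = d + 2*(j+1) by omega, pow_add, pow_mul]
      norm_num
    have hv : ((-1:Polynomial ℤ))^(j+1+d) * vv (2*(j+1))
        = (-1)^d * (Polynomial.X^((j+2).choose 2) + Polynomial.X^((j+1).choose 2)) := by
      rw [vv_even j, ← mul_assoc, ← pow_add, show j+1+d+(j+1) = d+2*(j+1) by omega, pow_add,
        pow_mul]
      norm_num
    rw [ht]
    simp only [e1, e3]
    rw [hsymm, hsgn, E1, E2, e2]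
    rw [pow_add, pow_add]
    linear_combination (-(Polynomial.X^D * gb (2*(j+1+d)) d)) * hv
  have hts : t s = (-1)^s * Polynomial.X^D * (gb (2*s) (s-0) * vv (2*0)) := by
    rw [ht, hD]
    simp only [Nat.sub_zero, Nat.mul_zero, vv_zero]
    rw [show 2*s - s = s by omega]
    ring
  -- assemble
  have assemble : ∑ k ∈ Finset.range (2*s+1), t k
      = (-1)^s * Polynomial.X^D * (∑ i ∈ Finset.range (s+1), gb (2*s) (s-i) * vv (2*i)) := by
    rw [hsplit, Finset.sum_range_succ' (fun i => gb (2*s) (s-i) * vv (2*i))]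
    rw [mul_add, Finset.mul_sum]
    have hpairs : ∑ j ∈ Finset.range s, (t (s-1-j) + t (s+(j+1)))
        = ∑ j ∈ Finset.range s, (-1)^s * Polynomial.X^D * (gb (2*s) (s-(j+1)) * vv (2*(j+1))) := by
      apply Finset.sum_congr rfl
      intro j hj
      have := pairEq j hj
      rw [show s-1-j = s-(j+1) by omega] at this ⊢
      exact this
    calc (∑ j ∈ Finset.range s, t (s-1-j)) + (t s + ∑ j ∈ Finset.range s, t (s+(j+1)))
        = (∑ j ∈ Finset.range s, (t (s-1-j) + t (s+(j+1)))) + t s := by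
          rw [Finset.sum_add_distrib]; ring
      _ = (∑ j ∈ Finset.range s, (-1)^s * Polynomial.X^D * (gb (2*s) (s-(j+1)) * vv (2*(j+1))))
          + (-1)^s * Polynomial.X^D * (gb (2*s) (s-0) * vv (2*0)) := by
          rw [hpairs, hts]
      _ = _ := by rw [add_comm]
  have hzero : ((-1:Polynomial ℤ))^s * Polynomial.X^D *
      (∑ i ∈ Finset.range (s+1), gb (2*s) (s-i) * vv (2*i)) = 0 := by
    rw [← assemble]; exact key
  rcases mul_eq_zero.mp hzero with h0 | h0
  · exfalso
    rcases mul_eq_zero.mp h0 with h1 | h1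
    · exact (pow_ne_zero s (by norm_num : (-1:Polynomial ℤ) ≠ 0)) h1
    · exact (pow_ne_zero D Polynomial.X_ne_zero) h1
  · exact h0



noncomputable def Hc (k : ℕ) : ℕ → Polynomial ℤ := fun j =>
  if j ≤ k ∧ (k+j) % 2 = 0 then gb k ((k-j)/2) else 0

noncomputable def mulX (f : ℕ → Polynomial ℤ) : ℕ → Polynomial ℤ := fun j =>
  if j = 0 then 2 * f 1 else f (j-1) + f (j+1)

noncomputable def cc (n : ℕ) : ℕ → Polynomial ℤ := fun j =>
  if j ≤ n ∧ (n+j) % 2 = 0 then ((n.choose ((n-j)/2) : ℤ) : Polynomial ℤ) else 0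

lemma HcRec (k : ℕ) : mulX (Hc k) = fun j =>
    Hc (k+1) j + (if k = 0 then 0 else 1 - Polynomial.X^k) * Hc (k-1) j := by
  funext j
  rcases Nat.eq_zero_or_pos k with rfl | hk
  · rw [if_pos rfl, zero_mul, add_zero]
    simp only [mulX, Hc]
    rcases j with _ | _ | j
    · norm_num
    · norm_num [gb_zero_right]
    · rw [if_neg (by omega), if_neg (by omega), if_neg (by omega), if_neg (by omega)]
      ring
  · rw [if_neg (by omega)]
    rcases Nat.eq_zero_or_pos j with rfl | hj
    · show 2 * Hc k 1 = Hc (k+1) 0 + (1 - Polynomial.X^k) * Hc (k-1) 0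
      by_cases hpar : k % 2 = 1
      · -- k = 2r+1
        obtain ⟨r, rfl⟩ : ∃ r, k = 2*r+1 := ⟨k/2, by omega⟩
        simp only [Hc]
        rw [if_pos (by omega), if_pos (by omega), if_pos (by omega)]
        rw [show (2*r+1-1)/2 = r by omega, show (2*r+1+1-0)/2 = r+1 by omega,
          show (2*r+1-1-0)/2 = r by omega, show 2*r+1-1 = 2*r by omega]
        -- 2 * gb (2r+1) r = gb (2r+2) (r+1) + (1 - X^(2r+1)) * gb (2r) r
        have P1 : gb (2*r+2) (r+1) = gb (2*r+1) (r+1) + Polynomial.X^(2*r+1-r) * gb (2*r+1) r := by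
          have := gb_def (2*r+1) r
          convert this using 2 <;> omega
        have S : gb (2*r+1) (r+1) = gb (2*r+1) r := by
          rw [gb_symm (2*r+1) (r+1) (by omega)]
          congr 1; omega
        have A := gb_aux (2*r) r (by omega)
        rw [show 2*r+1-r = r+1 by omega] at P1
        rw [show 2*r+1 = 2*r+1 by rfl] at A
        rw [show (2*r:ℕ)+1-r = r+1 by omega] at A
        linear_combination -P1 - S - A
      · -- k even : everything vanishes by parity
        obtain ⟨r, rfl⟩ : ∃ r, k = 2*r := ⟨k/2, by omega⟩
        simp only [Hc]
        rw [if_neg (by omega), if_neg (by omega), if_neg (by omega)]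
        ring
    · have hj' : j ≠ 0 := by omega
      show (if j = 0 then 2 * Hc k 1 else Hc k (j-1) + Hc k (j+1))
          = Hc (k+1) j + (1 - Polynomial.X^k) * Hc (k-1) j
      rw [if_neg hj']
      by_cases hpar : (k + j) % 2 = 0
      · -- all four vanish
        simp only [Hc]
        rw [if_neg (by omega), if_neg (by omega), if_neg (by omega), if_neg (by omega)]
        ring
      · rcases Nat.lt_or_ge (k+1) j with hbig | hle
        · simp only [Hc]
          rw [if_neg (by omega), if_neg (by omega), if_neg (by omega), if_neg (by omega)]
          ring
        · rcases Nat.eq_or_lt_of_le hle with heq | hlt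
          · -- j = k+1
            simp only [Hc]
            rw [if_pos (by omega), if_neg (by omega), if_pos (by omega), if_neg (by omega)]
            rw [show (k-(j-1))/2 = 0 by omega, show (k+1-j)/2 = 0 by omega]
            rw [gb_zero_right, gb_zero_right]
            ring
          · -- 1 ≤ j ≤ k, k+j odd
            obtain ⟨r, hr⟩ : ∃ r, k+1-j = 2*r := ⟨(k+1-j)/2, by omega⟩
            have hr1 : 1 ≤ r := by omega
            simp only [Hc]
            rw [if_pos (by omega), if_pos (by omega), if_pos (by omega), if_pos (by omega)]
            rw [show (k-(j-1))/2 = r by omega, show (k-(j+1))/2 = r-1 by omega,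
              show (k+1-j)/2 = r by omega, show (k-1-j)/2 = r-1 by omega]
            -- gb k r + gb k (r-1) = gb (k+1) r + (1-X^k) gb (k-1) (r-1)
            obtain ⟨r', rfl⟩ : ∃ r', r = r'+1 := ⟨r-1, by omega⟩
            obtain ⟨k', rfl⟩ : ∃ k', k = k'+1 := ⟨k-1, by omega⟩
            have PB : gb (k'+2) (r'+1) = gb (k'+1) (r'+1) + Polynomial.X^(k'+1-r') * gb (k'+1) r' := by
              have := gb_def (k'+1) r'
              convert this using 2
            have A := gb_aux k' r' (by omega)
            rw [show (k':ℕ)+1-r' = k'+1-r' by rfl] at A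
            simp only [Nat.add_sub_cancel]
            linear_combination -PB - A

lemma ccRec (n : ℕ) : mulX (cc n) = cc (n+1) := by
  funext j
  simp only [mulX, cc]
  rcases j with _ | j
  · -- j = 0
    rw [if_pos rfl]
    by_cases hpar : n % 2 = 1
    · obtain ⟨m, rfl⟩ : ∃ m, n = 2*m+1 := ⟨n/2, by omega⟩
      rw [if_pos (by omega), if_pos (by omega)]
      rw [show (2*m+1-1)/2 = m by omega, show (2*m+1+1-0)/2 = m+1 by omega]
      have h1 : (2*m+1+1).choose (m+1) = (2*m+1).choose m + (2*m+1).choose (m+1) :=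
        Nat.choose_succ_succ (2*m+1) m
      have h2 : (2*m+1).choose (m+1) = (2*m+1).choose m := by
        rw [← Nat.choose_symm (show m+1 ≤ 2*m+1 by omega)]
        congr 1; omega
      rw [h1, h2]
      push_cast
      ring
    · rw [if_neg (by omega), if_neg (by omega)]
      ring
  · rw [if_neg (by omega)]
    by_cases hpar : (n + (j+1)) % 2 = 1
    · rcases Nat.lt_or_ge (n+1) (j+1) with hbig | hle
      · rw [if_neg (by omega), if_neg (by omega), if_neg (by omega)]
        ring
      · rcases Nat.eq_or_lt_of_le hle with heq | hlt
        · -- j+1 = n+1, i.e. j = n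
          rw [if_pos (by omega), if_neg (by omega), if_pos (by omega)]
          rw [show (n-(j+1-1))/2 = 0 by omega, show (n+1-(j+1))/2 = 0 by omega]
          simp
        · -- j+1 ≤ n
          obtain ⟨d, hd⟩ : ∃ d, n+1-(j+1) = 2*d := ⟨(n-j)/2, by omega⟩
          have hd1 : 1 ≤ d := by omega
          rw [if_pos (by omega), if_pos (by omega), if_pos (by omega)]
          rw [show (n-(j+1-1))/2 = d by omega, show (n-(j+1+1))/2 = d-1 by omega,
            show (n+1-(j+1))/2 = d by omega]
          obtain ⟨d', rfl⟩ : ∃ d', d = d'+1 := ⟨d-1, by omega⟩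
          have h1 : (n+1).choose (d'+1) = n.choose d' + n.choose (d'+1) := by
            obtain ⟨n', rfl⟩ : ∃ n', n = n'+1 := ⟨n-1, by omega⟩
            exact Nat.choose_succ_succ (n'+1) d'
          rw [h1]
          simp only [Nat.add_sub_cancel]
          push_cast
          ring
    · rw [if_neg (by omega), if_neg (by omega), if_neg (by omega)]
      ring

lemma iter_cc (n : ℕ) : mulX^[n] (Hc 0) = cc n := by
  induction n with
  | zero =>
    funext j
    simp only [Function.iterate_zero, id, Hc, cc]
    rcases j with _ | j
    · simp [gb_zero_right]
    · rw [if_neg (by omega), if_neg (by omega)]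
  | succ n ih =>
    rw [Function.iterate_succ_apply', ih, ccRec]

noncomputable def Lfun (f : ℕ → Polynomial ℤ) (N : ℕ) : Polynomial ℤ :=
  ∑ j ∈ Finset.range N, f j * vv j

lemma Lfun_ext (f : ℕ → Polynomial ℤ) (N N' : ℕ) (h : N ≤ N')
    (hf : ∀ j, N ≤ j → f j = 0) : Lfun f N' = Lfun f N := by
  apply (Finset.sum_subset (Finset.range_subset_range.2 h) _).symm
  intro x _ hx
  rw [Finset.mem_range, not_lt] at hx
  rw [hf x hx, zero_mul]

lemma mulX_add (f g : ℕ → Polynomial ℤ) :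
    mulX (fun j => f j + g j) = fun j => mulX f j + mulX g j := by
  funext j
  simp only [mulX]
  split <;> ring

lemma mulX_smul (p : Polynomial ℤ) (f : ℕ → Polynomial ℤ) :
    mulX (fun j => p * f j) = fun j => p * mulX f j := by
  funext j
  simp only [mulX]
  split <;> ring

lemma iter_add (n : ℕ) (f g : ℕ → Polynomial ℤ) :
    mulX^[n] (fun j => f j + g j) = fun j => mulX^[n] f j + mulX^[n] g j := by
  induction n generalizing f g with
  | zero => simp
  | succ n ih =>
    rw [Function.iterate_succ_apply, Function.iterate_succ_apply, Function.iterate_succ_apply,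
      mulX_add, ih]

lemma iter_smul (n : ℕ) (p : Polynomial ℤ) (f : ℕ → Polynomial ℤ) :
    mulX^[n] (fun j => p * f j) = fun j => p * mulX^[n] f j := by
  induction n generalizing f with
  | zero => simp
  | succ n ih =>
    rw [Function.iterate_succ_apply, Function.iterate_succ_apply, mulX_smul, ih]

lemma mulX_supp (f : ℕ → Polynomial ℤ) (N : ℕ) (hN : 1 ≤ N) (hf : ∀ j, N ≤ j → f j = 0) :
    ∀ j, N+1 ≤ j → mulX f j = 0 := by
  intro j hj
  simp only [mulX]
  rw [if_neg (by omega), hf (j-1) (by omega), hf (j+1) (by omega), add_zero]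

lemma iter_supp (n : ℕ) (f : ℕ → Polynomial ℤ) (N : ℕ) (hN : 1 ≤ N)
    (hf : ∀ j, N ≤ j → f j = 0) : ∀ j, N+n ≤ j → mulX^[n] f j = 0 := by
  induction n generalizing f N with
  | zero => simpa using hf
  | succ n ih =>
    intro j hj
    rw [Function.iterate_succ_apply]
    exact ih (mulX f) (N+1) (by omega) (mulX_supp f N hN hf) j (by omega)

lemma Hc_supp (k : ℕ) : ∀ j, k+1 ≤ j → Hc k j = 0 := by
  intro j hj
  simp only [Hc]
  rw [if_neg (by omega)]

lemma sum_range_even (F : ℕ → Polynomial ℤ) (s : ℕ) (h : ∀ j, j % 2 = 1 → F j = 0) :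
    ∑ j ∈ Finset.range (2*s+1), F j = ∑ i ∈ Finset.range (s+1), F (2*i) := by
  induction s with
  | zero => simp
  | succ s ih =>
    rw [show 2*(s+1)+1 = (2*s+1)+1+1 by omega, Finset.sum_range_succ, Finset.sum_range_succ,
      ih, Finset.sum_range_succ]
    rw [h (2*s+1) (by omega)]
    rw [show 2*s+1+1 = 2*(s+1) by omega]
    rw [Finset.sum_range_succ (fun x => F (2*x)) (s+1), Finset.sum_range_succ (fun x => F (2*x)) s]
    ring

lemma Hc_orth (k : ℕ) : Lfun (Hc k) (k+1) = if k = 0 then 1 else 0 := by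
  rcases Nat.eq_zero_or_pos k with rfl | hk
  · rw [if_pos rfl]
    simp [Lfun, Hc, gb_zero_right, vv_zero]
  · rw [if_neg (by omega)]
    by_cases hpar : k % 2 = 1
    · -- odd k : all terms vanish
      apply Finset.sum_eq_zero
      intro j hj
      by_cases hjp : j % 2 = 1
      · rw [vv_odd j hjp, mul_zero]
      · simp only [Hc]
        rw [if_neg (by omega), zero_mul]
    · obtain ⟨s, rfl⟩ : ∃ s, k = 2*s := ⟨k/2, by omega⟩
      have hs : 1 ≤ s := by omega
      show ∑ j ∈ Finset.range (2*s+1), Hc (2*s) j * vv j = 0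
      rw [sum_range_even _ s (fun j hj => by
        simp only [Hc]; rw [if_neg (by omega), zero_mul])]
      rw [← orth s hs]
      apply Finset.sum_congr rfl
      intro i hi
      rw [Finset.mem_range] at hi
      congr 1
      simp only [Hc]
      rw [if_pos (by omega)]
      congr 1
      omega

lemma QbL : ∀ n k, Qb n k = Lfun (mulX^[n] (Hc k)) (n+k+1) := by
  intro n
  induction n with
  | zero =>
    intro k
    simp only [Function.iterate_zero, id, Nat.zero_add]
    rw [Hc_orth k]
    match k with
    | 0 => rfl
    | k+1 => rfl
  | succ n ih =>
    intro k
    have step : mulX^[n+1] (Hc k) = fun j =>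
        mulX^[n] (Hc (k+1)) j + (if k = 0 then 0 else 1 - Polynomial.X^k) * mulX^[n] (Hc (k-1)) j := by
      rw [Function.iterate_succ_apply, HcRec k, iter_add n, iter_smul n]
    show Qb (n+1) k = _
    rw [Qb, step]
    have hsplit : Lfun (fun j => mulX^[n] (Hc (k+1)) j
          + (if k = 0 then 0 else 1 - Polynomial.X^k) * mulX^[n] (Hc (k-1)) j) (n+1+k+1)
        = Lfun (mulX^[n] (Hc (k+1))) (n+1+k+1)
          + (if k = 0 then 0 else 1 - Polynomial.X^k) * Lfun (mulX^[n] (Hc (k-1))) (n+1+k+1) := by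
      simp only [Lfun, Finset.mul_sum, ← Finset.sum_add_distrib]
      apply Finset.sum_congr rfl
      intro j _
      ring
    rw [hsplit]
    congr 1
    · rw [ih (k+1), show n+(k+1)+1 = n+1+k+1 by omega]
    · rcases Nat.eq_zero_or_pos k with rfl | hk
      · simp
      · rw [if_neg (by omega)]
        congr 1
        rw [ih (k-1)]
        rw [Lfun_ext (mulX^[n] (Hc (k-1))) (n+(k-1)+1) (n+1+k+1) (by omega)]
        intro j hj
        exact iter_supp n (Hc (k-1)) (k-1+1) (by omega)
          (fun j' hj' => Hc_supp (k-1) j' (by omega)) j (by omega)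

lemma QbFinal (m : ℕ) : Qb (2*m) 0 =
    ∑ i ∈ Finset.range (m + 1),
        Polynomial.C ((-1 : ℤ) ^ i *
            ((Nat.choose (2 * m) (m - i) : ℤ) -
              if i < m then (Nat.choose (2 * m) (m - i - 1) : ℤ) else 0)) *
          Polynomial.X ^ Nat.choose (i + 1) 2 := by
  rw [QbL (2*m) 0, iter_cc]
  show ∑ j ∈ Finset.range (2*m+0+1), cc (2*m) j * vv j = _
  rw [show 2*m+0+1 = 2*m+1 by omega]
  rw [sum_range_even _ m (fun j hj => by
    simp only [cc]; rw [if_neg (by omega), zero_mul])]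
  have hS : ∀ i ∈ Finset.range (m+1), cc (2*m) (2*i) * vv (2*i)
      = (-1)^i * ((Nat.choose (2*m) (m-i) : ℤ) : Polynomial ℤ) * Polynomial.X^((i+1).choose 2)
        + (if i = 0 then 0 else
            (-1)^i * ((Nat.choose (2*m) (m-i) : ℤ) : Polynomial ℤ) * Polynomial.X^(i.choose 2)) := by
    intro i hi
    rw [Finset.mem_range] at hi
    have hcc : cc (2*m) (2*i) = ((Nat.choose (2*m) (m-i) : ℤ) : Polynomial ℤ) := by
      simp only [cc]
      rw [if_pos (by omega)]
      rw [show (2*m - 2*i)/2 = m - i by omega]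
    rw [hcc]
    rcases i with _ | i
    · simp [vv_zero]
    · rw [vv_even i, if_neg (by omega)]
      ring
  rw [Finset.sum_congr rfl hS, Finset.sum_add_distrib]
  rw [Finset.sum_range_succ' (fun i => if i = 0 then 0 else
      (-1)^i * ((Nat.choose (2*m) (m-i) : ℤ) : Polynomial ℤ) * Polynomial.X^(i.choose 2))]
  rw [if_pos rfl, add_zero]
  have hT : ∀ i ∈ Finset.range (m+1),
      Polynomial.C ((-1 : ℤ) ^ i *
            ((Nat.choose (2 * m) (m - i) : ℤ) -
              if i < m then (Nat.choose (2 * m) (m - i - 1) : ℤ) else 0)) *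
          Polynomial.X ^ Nat.choose (i + 1) 2
      = (-1)^i * ((Nat.choose (2*m) (m-i) : ℤ) : Polynomial ℤ) * Polynomial.X^((i+1).choose 2)
        - (if i < m then
            (-1)^i * ((Nat.choose (2*m) (m-i-1) : ℤ) : Polynomial ℤ) * Polynomial.X^((i+1).choose 2)
          else 0) := by
    intro i hi
    split_ifs with h
    · rw [map_mul, map_sub]
      simp only [map_pow, map_neg, map_one, Polynomial.C_eq_natCast]
      push_cast
      ring
    · rw [map_mul, map_sub]
      simp only [map_pow, map_neg, map_one, Polynomial.C_eq_natCast, map_zero]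
      push_cast
      ring
  rw [Finset.sum_congr rfl hT, Finset.sum_sub_distrib]
  congr 1
  rw [Finset.sum_range_succ (fun i => if i < m then
      (-1)^i * ((Nat.choose (2*m) (m-i-1) : ℤ) : Polynomial ℤ) * Polynomial.X^((i+1).choose 2)
    else 0)]
  rw [if_neg (by omega), add_zero]
  rw [← Finset.sum_neg_distrib]
  apply Finset.sum_congr rfl
  intro i hi
  rw [Finset.mem_range] at hi
  rw [if_neg (by omega), if_pos (by omega)]
  rw [show (m - (i+1) : ℕ) = m - i - 1 by omega]
  rw [pow_succ]
  ring




lemma crossNum_eq_sum (S : Finset (ℕ × ℕ)) :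
    crossNum S = ∑ p ∈ S, ∑ q ∈ S, if p.1 < q.1 ∧ q.1 < p.2 ∧ p.2 < q.2 then 1 else 0 := by
  rw [crossNum, Finset.card_filter, Finset.sum_product]

lemma crossNum_insert (p₀ : ℕ × ℕ) (M : Finset (ℕ × ℕ)) (h : p₀ ∉ M) :
    crossNum (insert p₀ M) = crossNum M
      + (M.filter (fun q => p₀.1 < q.1 ∧ q.1 < p₀.2 ∧ p₀.2 < q.2)).card
      + (M.filter (fun q => q.1 < p₀.1 ∧ p₀.1 < q.2 ∧ q.2 < p₀.2)).card := by
  rw [crossNum_eq_sum, crossNum_eq_sum, Finset.sum_insert h]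
  have h1 : ∑ q ∈ insert p₀ M, (if p₀.1 < q.1 ∧ q.1 < p₀.2 ∧ p₀.2 < q.2 then 1 else 0)
      = (M.filter (fun q => p₀.1 < q.1 ∧ q.1 < p₀.2 ∧ p₀.2 < q.2)).card := by
    rw [Finset.sum_insert h, if_neg (by omega), Finset.card_filter]
    omega
  have h2 : ∀ p ∈ M, ∑ q ∈ insert p₀ M, (if p.1 < q.1 ∧ q.1 < p.2 ∧ p.2 < q.2 then 1 else 0)
      = (if p.1 < p₀.1 ∧ p₀.1 < p.2 ∧ p.2 < p₀.2 then 1 else 0)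
        + ∑ q ∈ M, (if p.1 < q.1 ∧ q.1 < p.2 ∧ p.2 < q.2 then 1 else 0) := by
    intro p _
    rw [Finset.sum_insert h]
  rw [h1, Finset.sum_congr rfl h2, Finset.sum_add_distrib, ← Finset.card_filter]
  omega

def isM (S B : Finset ℕ) (M : Finset (ℕ × ℕ)) : Prop :=
  (∀ p ∈ M, p.1 < p.2) ∧ (∀ x ∈ S ∪ B, ∃! p, p ∈ M ∧ (x = p.1 ∨ x = p.2)) ∧
  (∀ p ∈ M, p.1 ∈ S ∪ B ∧ p.2 ∈ B)

noncomputable def FF (S B : Finset ℕ) : Polynomial ℤ :=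
  ∑ M ∈ ((S ∪ B) ×ˢ (S ∪ B)).powerset.filter (isM S B), Polynomial.X ^ crossNum M

lemma sum_pow_filter : ∀ (S : Finset ℕ),
    ∑ a ∈ S, (Polynomial.X : Polynomial ℤ)^((S.filter (fun c => a < c)).card)
    = ∑ j ∈ Finset.range S.card, Polynomial.X ^ j := by
  intro S
  induction S using Finset.induction_on_max with
  | empty => simp
  | insert b S hb ih =>
    have hbS : b ∉ S := fun hmem => lt_irrefl b (hb b hmem)
    rw [Finset.sum_insert hbS, Finset.card_insert_of_notMem hbS]
    have hcb : ((insert b S).filter (fun c => b < c)).card = 0 := by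
      rw [Finset.card_eq_zero, Finset.filter_eq_empty_iff]
      intro x hx
      rw [Finset.mem_insert] at hx
      rcases hx with rfl | hx
      · omega
      · have := hb x hx; omega
    have hca : ∀ a ∈ S, ((insert b S).filter (fun c => a < c)).card
        = (S.filter (fun c => a < c)).card + 1 := by
      intro a ha
      rw [Finset.filter_insert, if_pos (hb a ha),
        Finset.card_insert_of_notMem (fun hmem => hbS (Finset.mem_filter.1 hmem).1)]
    rw [hcb, Finset.sum_congr rfl (fun a ha => by rw [hca a ha])]
    rw [Finset.sum_range_succ' (fun j => (Polynomial.X : Polynomial ℤ)^j)]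
    simp only [pow_succ, pow_zero]
    rw [← Finset.sum_mul, ih, ← Finset.sum_mul]
    ring

theorem Fval : ∀ n S B k, B.card = n → S.card = k → (∀ s ∈ S, ∀ b ∈ B, s < b) →
    FF S B = Np n k := by
  intro n
  induction n with
  | zero =>
    intro S B k hB hS hSB
    rw [Finset.card_eq_zero] at hB
    subst hB
    rcases Nat.eq_zero_or_pos k with rfl | hk
    · rw [Finset.card_eq_zero] at hS
      subst hS
      show FF ∅ ∅ = Np 0 0
      rw [FF]
      have : (((∅:Finset ℕ) ∪ ∅) ×ˢ ((∅:Finset ℕ) ∪ ∅)).powerset.filter (isM ∅ ∅) = {∅} := by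
        apply Finset.ext
        intro M
        simp only [Finset.union_empty, Finset.product_empty, Finset.powerset_empty,
          Finset.mem_filter, Finset.mem_singleton]
        constructor
        · rintro ⟨h1, _⟩; exact h1
        · rintro rfl
          refine ⟨rfl, ?_, ?_, ?_⟩ <;> simp [isM]
      rw [this, Finset.sum_singleton]
      have : crossNum ∅ = 0 := by simp [crossNum]
      rw [this, pow_zero]
      rfl
    · have hempty : ((S ∪ ∅) ×ˢ (S ∪ ∅)).powerset.filter (isM S ∅) = ∅ := by
        rw [Finset.filter_eq_empty_iff]
        intro M hM
        rintro ⟨hlt, huniq, hmem⟩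
        obtain ⟨s, hs⟩ := Finset.card_pos.1 (hS ▸ hk)
        obtain ⟨p, ⟨hpM, hpx⟩, -⟩ := huniq s (Finset.mem_union_left _ hs)
        have := (hmem p hpM).2
        simp at this
      rw [FF, hempty, Finset.sum_empty]
      obtain ⟨k', rfl⟩ : ∃ k', k = k'+1 := ⟨k-1, by omega⟩
      rfl
  | succ n ih =>
    intro S B k hB hS hSB
    have hBne : B.Nonempty := Finset.card_pos.1 (by omega)
    set t := B.min' hBne with htdef
    have htB : t ∈ B := B.min'_mem hBne
    have htmin : ∀ b ∈ B, t ≤ b := fun b hb => B.min'_le b hb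
    have htS : t ∉ S := fun hmem => lt_irrefl t (hSB t hmem t htB)
    have hSnB : ∀ x ∈ S, x ∉ B := by
      intro x hx hxB
      exact lt_irrefl x (hSB x hx x hxB)
    have hg : insert t S ∪ B.erase t = S ∪ B := by
      apply Finset.ext
      intro x
      simp only [Finset.mem_union, Finset.mem_insert, Finset.mem_erase]
      constructor
      · rintro ((rfl | hx) | ⟨-, hx⟩)
        · exact Or.inr htB
        · exact Or.inl hx
        · exact Or.inr hx
      · rintro (hx | hx)
        · exact Or.inl (Or.inr hx)
        · by_cases hxt : x = t
          · exact Or.inl (Or.inl hxt)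
          · exact Or.inr ⟨hxt, hx⟩
    have hbr1 : (((S ∪ B) ×ˢ (S ∪ B)).powerset.filter (isM S B)).filter (fun M => ∃ p ∈ M, p.1 = t)
        = ((insert t S ∪ B.erase t) ×ˢ (insert t S ∪ B.erase t)).powerset.filter
            (isM (insert t S) (B.erase t)) := by
      rw [hg, Finset.filter_filter]
      apply Finset.filter_congr
      intro M hM
      rw [Finset.mem_powerset] at hM
      constructor
      · rintro ⟨⟨hlt, huniq, hmem⟩, ⟨p₀, hp₀, hp₀t⟩⟩
        refine ⟨hlt, by rwa [hg], ?_⟩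
        intro p hp
        refine ⟨by rw [hg]; exact (hmem p hp).1, Finset.mem_erase.2 ⟨?_, (hmem p hp).2⟩⟩
        intro hp2t
        obtain ⟨q, -, hq⟩ := huniq t (Finset.mem_union_right _ htB)
        have e1 : p = q := hq p ⟨hp, Or.inr hp2t.symm⟩
        have e2 : p₀ = q := hq p₀ ⟨hp₀, Or.inl hp₀t.symm⟩
        have e3 : p = p₀ := by rw [e1, e2]
        have h4 := hlt p hp
        rw [e3] at hp2t h4
        omega
      · rintro ⟨hlt, huniq, hmem⟩
        have huniq' : ∀ x ∈ S ∪ B, ∃! p, p ∈ M ∧ (x = p.1 ∨ x = p.2) := by rwa [hg] at huniq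
        refine ⟨⟨hlt, huniq', ?_⟩, ?_⟩
        · intro p hp
          exact ⟨by rw [← hg]; exact (hmem p hp).1, Finset.mem_of_mem_erase (hmem p hp).2⟩
        · obtain ⟨p, ⟨hpM, hpx⟩, -⟩ := huniq t (by rw [hg]; exact Finset.mem_union_right _ htB)
          refine ⟨p, hpM, ?_⟩
          rcases hpx with h1 | h2
          · exact h1.symm
          · exact absurd h2.symm (Finset.mem_erase.1 (hmem p hpM).2).1
    have hbr2 : (((S ∪ B) ×ˢ (S ∪ B)).powerset.filter (isM S B)).filter
          (fun M => ¬ ∃ p ∈ M, p.1 = t)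
        = S.biUnion (fun a => (((S ∪ B) ×ˢ (S ∪ B)).powerset.filter (isM S B)).filter
            (fun M => (a,t) ∈ M)) := by
      apply Finset.ext
      intro M
      simp only [Finset.mem_biUnion, Finset.mem_filter]
      constructor
      · rintro ⟨⟨hpow, hM⟩, hno⟩
        obtain ⟨hlt, huniq, hmem⟩ := hM
        obtain ⟨p₀, ⟨hp₀M, hp₀x⟩, -⟩ := huniq t (Finset.mem_union_right _ htB)
        have hp2 : t = p₀.2 := by
          rcases hp₀x with h1 | h2
          · exact absurd ⟨p₀, hp₀M, h1.symm⟩ hno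
          · exact h2
        have ha : p₀.1 ∈ S := by
          have h1 := (hmem p₀ hp₀M).1
          rw [Finset.mem_union] at h1
          rcases h1 with h1 | h1
          · exact h1
          · exfalso
            have h2 := hlt p₀ hp₀M
            have := htmin p₀.1 h1
            omega
        refine ⟨p₀.1, ha, ⟨hpow, hlt, huniq, hmem⟩, ?_⟩
        have : (p₀.1, t) = p₀ := by rw [hp2]
        rw [this]
        exact hp₀M
      · rintro ⟨a, haS, ⟨⟨hpow, hM⟩, hat⟩⟩
        refine ⟨⟨hpow, hM⟩, ?_⟩
        rintro ⟨p, hpM, hp1⟩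
        obtain ⟨hlt, huniq, hmem⟩ := hM
        obtain ⟨q, -, hq⟩ := huniq t (Finset.mem_union_right _ htB)
        have e1 : p = q := hq p ⟨hpM, Or.inl hp1.symm⟩
        have e2 : (a, t) = q := hq (a,t) ⟨hat, Or.inr rfl⟩
        have e3 : a = p.1 := by rw [show a = (a,t).1 from rfl, e2, ← e1]
        rw [hp1] at e3
        exact htS (e3 ▸ haS)
    have hdisj : (↑S : Set ℕ).PairwiseDisjoint
        (fun a => (((S ∪ B) ×ˢ (S ∪ B)).powerset.filter (isM S B)).filter
          (fun M => (a,t) ∈ M)) := by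
      intro a ha a' ha' hne
      simp only [Function.onFun, Finset.disjoint_left]
      intro M hM hM'
      simp only [Finset.mem_filter] at hM hM'
      obtain ⟨⟨-, ⟨-, huniq, -⟩⟩, hat⟩ := hM
      obtain ⟨-, hat'⟩ := hM'
      obtain ⟨q, -, hq⟩ := huniq t (Finset.mem_union_right _ htB)
      have e1 : (a, t) = q := hq (a,t) ⟨hat, Or.inr rfl⟩
      have e2 : (a', t) = q := hq (a',t) ⟨hat', Or.inr rfl⟩
      apply hne
      have : (a,t).1 = (a',t).1 := by rw [e1, e2]
      simpa using this
    have hper : ∀ a ∈ S,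
        ∑ M ∈ (((S ∪ B) ×ˢ (S ∪ B)).powerset.filter (isM S B)).filter (fun M => (a,t) ∈ M),
          Polynomial.X ^ crossNum M
        = Polynomial.X ^ ((S.filter (fun c => a < c)).card) * FF (S.erase a) (B.erase t) := by
      intro a haS
      have haB : a ∉ B := hSnB a haS
      have hatlt : a < t := hSB a haS t htB
      rw [FF, Finset.mul_sum]
      apply Finset.sum_nbij' (i := fun M => M.erase (a,t)) (j := fun M' => insert (a,t) M')
      · -- i maps into target
        intro M hMmem
        rw [Finset.mem_filter] at hMmem
        obtain ⟨hMP, hatM⟩ := hMmem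
        rw [Finset.mem_filter, Finset.mem_powerset] at hMP
        obtain ⟨hpow, hlt, huniq, hmem⟩ := hMP
        have hnm : ∀ p ∈ M, p ≠ (a,t) → p.1 ≠ a ∧ p.1 ≠ t ∧ p.2 ≠ a ∧ p.2 ≠ t := by
          intro p hp hne
          obtain ⟨qa, -, hqa⟩ := huniq a (Finset.mem_union_left _ haS)
          obtain ⟨qt, -, hqt⟩ := huniq t (Finset.mem_union_right _ htB)
          have hta : (a,t) = qa := hqa (a,t) ⟨hatM, Or.inl rfl⟩
          have htt : (a,t) = qt := hqt (a,t) ⟨hatM, Or.inr rfl⟩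
          refine ⟨?_, ?_, ?_, ?_⟩
          · intro h; exact hne ((hqa p ⟨hp, Or.inl h.symm⟩).trans hta.symm)
          · intro h; exact hne ((hqt p ⟨hp, Or.inl h.symm⟩).trans htt.symm)
          · intro h; exact hne ((hqa p ⟨hp, Or.inr h.symm⟩).trans hta.symm)
          · intro h; exact hne ((hqt p ⟨hp, Or.inr h.symm⟩).trans htt.symm)
        rw [Finset.mem_filter, Finset.mem_powerset]
        refine ⟨?_, ?_, ?_, ?_⟩
        · -- subset
          intro p hp
          rw [Finset.mem_erase] at hp
          obtain ⟨hpne, hpM⟩ := hp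
          obtain ⟨h1, h2, h3, h4⟩ := hnm p hpM hpne
          have hm1 := (hmem p hpM).1
          have hm2 := (hmem p hpM).2
          rw [Finset.mem_product]
          constructor
          · rw [Finset.mem_union] at hm1 ⊢
            rcases hm1 with h | h
            · exact Or.inl (Finset.mem_erase.2 ⟨h1, h⟩)
            · exact Or.inr (Finset.mem_erase.2 ⟨h2, h⟩)
          · exact Finset.mem_union_right _ (Finset.mem_erase.2 ⟨h4, hm2⟩)
        · -- lt
          intro p hp
          exact hlt p (Finset.mem_of_mem_erase hp)
        · -- uniqueness
          intro x hx
          have hxa : x ≠ a := by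
            rw [Finset.mem_union, Finset.mem_erase, Finset.mem_erase] at hx
            rintro rfl
            rcases hx with ⟨h, -⟩ | ⟨-, h⟩
            · exact h rfl
            · exact haB h
          have hxt : x ≠ t := by
            rw [Finset.mem_union, Finset.mem_erase, Finset.mem_erase] at hx
            rintro rfl
            rcases hx with ⟨-, h⟩ | ⟨h, -⟩
            · exact htS h
            · exact h rfl
          have hx' : x ∈ S ∪ B := by
            rw [Finset.mem_union] at hx ⊢
            rcases hx with h | h
            · exact Or.inl (Finset.mem_of_mem_erase h)
            · exact Or.inr (Finset.mem_of_mem_erase h)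
          obtain ⟨p, ⟨hpM, hpx⟩, hpu⟩ := huniq x hx'
          have hpne : p ≠ (a,t) := by
            rintro rfl
            rcases hpx with h | h
            · exact hxa h
            · exact hxt h
          refine ⟨p, ⟨Finset.mem_erase.2 ⟨hpne, hpM⟩, hpx⟩, ?_⟩
          rintro q ⟨hqM, hqx⟩
          exact hpu q ⟨Finset.mem_of_mem_erase hqM, hqx⟩
        · -- mem conditions
          intro p hp
          rw [Finset.mem_erase] at hp
          obtain ⟨hpne, hpM⟩ := hp
          obtain ⟨h1, h2, h3, h4⟩ := hnm p hpM hpne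
          have hm1 := (hmem p hpM).1
          have hm2 := (hmem p hpM).2
          constructor
          · rw [Finset.mem_union] at hm1 ⊢
            rcases hm1 with h | h
            · exact Or.inl (Finset.mem_erase.2 ⟨h1, h⟩)
            · exact Or.inr (Finset.mem_erase.2 ⟨h2, h⟩)
          · exact Finset.mem_erase.2 ⟨h4, hm2⟩
      · -- j maps into source
        intro M' hM'
        rw [Finset.mem_filter, Finset.mem_powerset] at hM'
        obtain ⟨hpow, hlt, huniq, hmem⟩ := hM'
        have hgnd : ∀ p ∈ M', (p.1 ≠ a ∧ p.1 ≠ t) ∧ (p.2 ≠ a ∧ p.2 ≠ t) := by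
          intro p hp
          have hm1 := (hmem p hp).1
          have hm2 := (hmem p hp).2
          rw [Finset.mem_union, Finset.mem_erase, Finset.mem_erase] at hm1
          rw [Finset.mem_erase] at hm2
          constructor
          · rcases hm1 with ⟨h, hS'⟩ | ⟨h, hB'⟩
            · exact ⟨h, fun he => htS (he ▸ hS')⟩
            · exact ⟨fun he => haB (he ▸ hB'), h⟩
          · exact ⟨fun he => haB (he ▸ hm2.2), hm2.1⟩
        rw [Finset.mem_filter, Finset.mem_filter, Finset.mem_powerset]
        refine ⟨⟨?_, ?_, ?_, ?_⟩, Finset.mem_insert_self _ _⟩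
        · -- subset
          intro p hp
          rw [Finset.mem_insert] at hp
          rcases hp with rfl | hp
          · rw [Finset.mem_product]
            exact ⟨Finset.mem_union_left _ haS, Finset.mem_union_right _ htB⟩
          · have := hpow hp
            rw [Finset.mem_product] at this ⊢
            constructor
            · rcases Finset.mem_union.1 this.1 with h | h
              · exact Finset.mem_union_left _ (Finset.mem_of_mem_erase h)
              · exact Finset.mem_union_right _ (Finset.mem_of_mem_erase h)
            · rcases Finset.mem_union.1 this.2 with h | h
              · exact Finset.mem_union_left _ (Finset.mem_of_mem_erase h)
              · exact Finset.mem_union_right _ (Finset.mem_of_mem_erase h)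
        · -- lt
          intro p hp
          rw [Finset.mem_insert] at hp
          rcases hp with rfl | hp
          · exact hatlt
          · exact hlt p hp
        · -- uniqueness
          intro x hx
          by_cases hxa : x = a
          · refine ⟨(a, t), ⟨Finset.mem_insert_self _ _, Or.inl hxa⟩, ?_⟩
            rintro q ⟨hqM, hqx⟩
            rw [Finset.mem_insert] at hqM
            rcases hqM with rfl | hqM
            · rfl
            · exfalso
              obtain ⟨⟨h1, -⟩, ⟨h3, -⟩⟩ := hgnd q hqM
              rcases hqx with h | h
              · exact h1 (hxa.symm.trans h).symm
              · exact h3 (hxa.symm.trans h).symm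
          · by_cases hxt : x = t
            · refine ⟨(a, t), ⟨Finset.mem_insert_self _ _, Or.inr hxt⟩, ?_⟩
              rintro q ⟨hqM, hqx⟩
              rw [Finset.mem_insert] at hqM
              rcases hqM with rfl | hqM
              · rfl
              · exfalso
                obtain ⟨⟨-, h2⟩, ⟨-, h4⟩⟩ := hgnd q hqM
                rcases hqx with h | h
                · exact h2 (hxt.symm.trans h).symm
                · exact h4 (hxt.symm.trans h).symm
            · have hx' : x ∈ S.erase a ∪ B.erase t := by
                rw [Finset.mem_union] at hx ⊢
                rcases hx with h | h
                · exact Or.inl (Finset.mem_erase.2 ⟨hxa, h⟩)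
                · exact Or.inr (Finset.mem_erase.2 ⟨hxt, h⟩)
              obtain ⟨p, ⟨hpM, hpx⟩, hpu⟩ := huniq x hx'
              refine ⟨p, ⟨Finset.mem_insert_of_mem hpM, hpx⟩, ?_⟩
              rintro q ⟨hqM, hqx⟩
              rw [Finset.mem_insert] at hqM
              rcases hqM with rfl | hqM
              · exfalso
                rcases hqx with h | h
                · exact hxa h
                · exact hxt h
              · exact hpu q ⟨hqM, hqx⟩
        · -- mem conditions
          intro p hp
          rw [Finset.mem_insert] at hp
          rcases hp with rfl | hp
          · exact ⟨Finset.mem_union_left _ haS, htB⟩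
          · have hm1 := (hmem p hp).1
            have hm2 := (hmem p hp).2
            constructor
            · rcases Finset.mem_union.1 hm1 with h | h
              · exact Finset.mem_union_left _ (Finset.mem_of_mem_erase h)
              · exact Finset.mem_union_right _ (Finset.mem_of_mem_erase h)
            · exact Finset.mem_of_mem_erase hm2
      · -- left inverse
        intro M hMmem
        rw [Finset.mem_filter] at hMmem
        exact Finset.insert_erase hMmem.2
      · -- right inverse
        intro M' hM'
        rw [Finset.mem_filter, Finset.mem_powerset] at hM'
        obtain ⟨hpow, -, -, hmem⟩ := hM'
        apply Finset.erase_insert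
        intro hcon
        have := (hmem (a,t) hcon).2
        rw [Finset.mem_erase] at this
        exact this.1 rfl
      · -- weights
        intro M hMmem
        rw [Finset.mem_filter] at hMmem
        obtain ⟨hMP, hatM⟩ := hMmem
        rw [Finset.mem_filter, Finset.mem_powerset] at hMP
        obtain ⟨hpow, hlt, huniq, hmem⟩ := hMP
        have hins : M = insert (a,t) (M.erase (a,t)) := (Finset.insert_erase hatM).symm
        have hnotin : (a,t) ∉ M.erase (a,t) := Finset.notMem_erase _ _
        have hcr := crossNum_insert (a,t) (M.erase (a,t)) hnotin
        rw [← hins] at hcr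
        have hc2 : ((M.erase (a,t)).filter
            (fun q => q.1 < (a,t).1 ∧ (a,t).1 < q.2 ∧ q.2 < (a,t).2)).card = 0 := by
          rw [Finset.card_eq_zero, Finset.filter_eq_empty_iff]
          intro q hq
          have hm2 := (hmem q (Finset.mem_of_mem_erase hq)).2
          have := htmin q.2 hm2
          dsimp only
          omega
        have hc1 : ((M.erase (a,t)).filter
            (fun q => (a,t).1 < q.1 ∧ q.1 < (a,t).2 ∧ (a,t).2 < q.2)).card
            = (S.filter (fun c => a < c)).card := by
          apply Finset.card_bij (fun q _ => q.1)
          · intro q hq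
            rw [Finset.mem_filter] at hq ⊢
            obtain ⟨hqe, hq1, hq2, hq3⟩ := hq
            have hqM := Finset.mem_of_mem_erase hqe
            have hm1 := (hmem q hqM).1
            rw [Finset.mem_union] at hm1
            rcases hm1 with h | h
            · exact ⟨h, hq1⟩
            · exfalso; have := htmin q.1 h; dsimp only at hq2; omega
          · intro q hq q' hq' heq
            rw [Finset.mem_filter] at hq hq'
            have hqM := Finset.mem_of_mem_erase hq.1
            have hq'M := Finset.mem_of_mem_erase hq'.1
            obtain ⟨r, -, hr⟩ := huniq q.1 ((hmem q hqM).1)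
            have e1 : q = r := hr q ⟨hqM, Or.inl rfl⟩
            have e2 : q' = r := hr q' ⟨hq'M, Or.inl heq⟩
            rw [e1, e2]
          · intro c hc
            rw [Finset.mem_filter] at hc
            obtain ⟨hcS, hac⟩ := hc
            obtain ⟨p, ⟨hpM, hpx⟩, -⟩ := huniq c (Finset.mem_union_left _ hcS)
            have hcp1 : c = p.1 := by
              rcases hpx with h | h
              · exact h
              · exfalso
                have := (hmem p hpM).2
                exact hSnB c hcS (h ▸ this)
            have hpne : p ≠ (a,t) := by
              rintro rfl
              dsimp only at hcp1
              omega
            refine ⟨p, Finset.mem_filter.2 ⟨Finset.mem_erase.2 ⟨hpne, hpM⟩, ?_, ?_, ?_⟩, hcp1.symm⟩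
            · dsimp only; omega
            · dsimp only
              have := hSB c hcS t htB
              omega
            · dsimp only
              have hm2 := (hmem p hpM).2
              have h1 := htmin p.2 hm2
              have h2 : p.2 ≠ t := by
                intro he
                obtain ⟨r, -, hr⟩ := huniq t (Finset.mem_union_right _ htB)
                have e1 : p = r := hr p ⟨hpM, Or.inr he.symm⟩
                have e2 : (a,t) = r := hr (a,t) ⟨hatM, Or.inr rfl⟩
                exact hpne (e1.trans e2.symm)
              omega
        rw [hcr, hc1, hc2, Nat.add_zero, pow_add]
        ring
    -- assemble
    rw [FF, ← Finset.sum_filter_add_sum_filter_not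
      (((S ∪ B) ×ˢ (S ∪ B)).powerset.filter (isM S B)) (fun M => ∃ p ∈ M, p.1 = t)]
    rw [hbr1, hbr2, Finset.sum_biUnion hdisj]
    have hFF1 : ∑ M ∈ ((insert t S ∪ B.erase t) ×ˢ (insert t S ∪ B.erase t)).powerset.filter
          (isM (insert t S) (B.erase t)), Polynomial.X ^ crossNum M
        = FF (insert t S) (B.erase t) := rfl
    rw [hFF1, Finset.sum_congr rfl hper]
    have hIH1 : FF (insert t S) (B.erase t) = Np n (k+1) := by
      apply ih
      · rw [Finset.card_erase_of_mem htB, hB]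
        omega
      · rw [Finset.card_insert_of_notMem htS, hS]
      · intro s hs b hb
        rw [Finset.mem_insert] at hs
        rw [Finset.mem_erase] at hb
        rcases hs with rfl | hs
        · have := htmin b hb.2
          omega
        · exact hSB s hs b hb.2
    have hIH2 : ∀ a ∈ S, FF (S.erase a) (B.erase t) = Np n (k-1) := by
      intro a haS
      apply ih
      · rw [Finset.card_erase_of_mem htB, hB]
        omega
      · rw [Finset.card_erase_of_mem haS, hS]
      · intro s hs b hb
        exact hSB s (Finset.mem_of_mem_erase hs) b (Finset.mem_of_mem_erase hb)
    rw [hIH1]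
    rw [Finset.sum_congr rfl (fun a ha => by rw [hIH2 a ha])]
    rw [← Finset.sum_mul, sum_pow_filter, hS]
    rfl

/-- The Touchard–Riordan formula:
`T_m(q)(1−q)^m = Σ_{i=0}^m (−1)^i [C(2m, m−i) − C(2m, m−i−1)] q^{C(i+1,2)}`
(with `C(2m, m−i−1)` read as `0` for `i = m`). -/
theorem touchard_riordan (m : ℕ) :
    touchardPoly m * (1 - Polynomial.X) ^ m =
      ∑ i ∈ Finset.range (m + 1),
        Polynomial.C ((-1 : ℤ) ^ i *
            ((Nat.choose (2 * m) (m - i) : ℤ) -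
              if i < m then (Nat.choose (2 * m) (m - i - 1) : ℤ) else 0)) *
          Polynomial.X ^ Nat.choose (i + 1) 2 := by
  have h1 : touchardPoly m = FF ∅ (Finset.range (2 * m)) := by
    rw [touchardPoly, FF]
    rw [Finset.empty_union]
    apply Finset.sum_congr _ (fun _ _ => rfl)
    apply Finset.filter_congr
    intro M hM
    rw [Finset.mem_powerset] at hM
    constructor
    · rintro ⟨hlt, huniq⟩
      refine ⟨hlt, ?_, ?_⟩
      · intro x hx
        rw [Finset.empty_union, Finset.mem_range] at hx
        exact huniq x hx
      · intro p hp
        have := hM hp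
        rw [Finset.mem_product] at this
        exact ⟨by rw [Finset.empty_union]; exact this.1, this.2⟩
    · rintro ⟨hlt, huniq, hmem⟩
      refine ⟨hlt, fun x hx => huniq x ?_⟩
      rw [Finset.empty_union, Finset.mem_range]
      exact hx
  rw [h1, Fval (2*m) ∅ (Finset.range (2*m)) 0 (Finset.card_range _) (Finset.card_empty)
    (fun s hs => absurd hs (Finset.notMem_empty s))]
  have h2 := Np_Qb (2*m) 0 (by omega)
  rw [show (2*m+0)/2 = m by omega] at h2
  rw [h2, QbFinal]
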